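/- Let D ∈ ℝ^{l×d} with rows d₁,...,d_l, M ∈ ℝ^{d×k} with columns μ₁,...,μ_k, ω ∈ ℝ^k, and M₃ᵣ = Σ_h ω_h (μ_h)ᵣ μ_h μ_hᵀ. Then for each pair i ≠ j, sup over v ∈ 𝒱_M of Σ_{h=1}^k ⟨dᵢ,μ_h⟩⟨dⱼ,μ_h⟩ ω_h v_h equals (Σ_{r=1}^d (D M₃ᵣ Dᵀ)²_{i,j})^{1/2}, where 𝒱_M = {v ∈ ℝ^k : v = Mᵀα for some α ∈ ℝ^d with ‖α‖₂ ≤ 1}. -/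

import Mathlib

open Matrix
open RealInnerProductSpace

lemma sum_swap3 {k d : ℕ} (f : Fin k → Fin d → Fin d → ℝ) :
    ∑ a : Fin d, ∑ b : Fin d, ∑ h : Fin k, f h a b
      = ∑ h : Fin k, ∑ a : Fin d, ∑ b : Fin d, f h a b := by
  rw [show (∑ a : Fin d, ∑ b : Fin d, ∑ h : Fin k, f h a b)
      = ∑ a : Fin d, ∑ h : Fin k, ∑ b : Fin d, f h a b from
    Finset.sum_congr rfl fun a _ => Finset.sum_comm, Finset.sum_comm]

lemma sup_inner_ball {n : ℕ} (w : EuclideanSpace ℝ (Fin n)) :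
    sSup {x : ℝ | ∃ α : EuclideanSpace ℝ (Fin n), ‖α‖ ≤ 1 ∧ x = ∑ r, w r * α r} = ‖w‖ := by
  have hinner : ∀ α : EuclideanSpace ℝ (Fin n), (∑ r, w r * α r) = ⟪w, α⟫ := by
    intro α
    simp [PiLp.inner_apply, RCLike.inner_apply, mul_comm]
  apply IsGreatest.csSup_eq
  constructor
  · by_cases hw : w = 0
    · exact ⟨0, by simp, by simp [hw]⟩
    · refine ⟨‖w‖⁻¹ • w, ?_, ?_⟩
      · simp [norm_smul, abs_of_nonneg (inv_nonneg.2 (norm_nonneg w)),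
          inv_mul_cancel₀ (norm_ne_zero_iff.2 hw)]
      · rw [hinner, real_inner_smul_right, real_inner_self_eq_norm_sq]
        field_simp [norm_ne_zero_iff.2 hw]
  · rintro x ⟨α, hα, rfl⟩
    rw [hinner]
    calc ⟪w, α⟫ ≤ ‖w‖ * ‖α‖ := real_inner_le_norm w α
    _ ≤ ‖w‖ * 1 := mul_le_mul_of_nonneg_left hα (norm_nonneg w)
    _ = ‖w‖ := mul_one _

theorem sup_form_of_objective (d k l : ℕ)
    (D : Matrix (Fin l) (Fin d) ℝ) (M : Matrix (Fin d) (Fin k) ℝ) (ω : Fin k → ℝ)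
    (i j : Fin l) (hij : i ≠ j) :
    sSup {x : ℝ | ∃ α : EuclideanSpace ℝ (Fin d), ‖α‖ ≤ 1 ∧
        x = ∑ h : Fin k, (∑ r : Fin d, D i r * M r h) * (∑ r : Fin d, D j r * M r h) *
              ω h * (∑ r : Fin d, M r h * α r)} =
      Real.sqrt (∑ r : Fin d,
        ((D * (∑ h : Fin k, (ω h * M r h) •
            Matrix.vecMulVec (fun a => M a h) (fun b => M b h)) * Dᵀ) i j) ^ 2) := by
  set c : Fin k → ℝ := fun h =>
    (∑ a : Fin d, D i a * M a h) * (∑ b : Fin d, D j b * M b h) * ω h with hc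
  set w : EuclideanSpace ℝ (Fin d) := WithLp.toLp 2 (fun r => ∑ h : Fin k, c h * M r h) with hw
  have key : ∀ α : EuclideanSpace ℝ (Fin d),
      (∑ h : Fin k, c h * (∑ r : Fin d, M r h * α r)) = ∑ r, w r * α r := by
    intro α
    simp only [hw, PiLp.toLp_apply, Finset.mul_sum, Finset.sum_mul]
    rw [Finset.sum_comm]
    exact Finset.sum_congr rfl fun r _ => Finset.sum_congr rfl fun h _ => by ring
  have hset : {x : ℝ | ∃ α : EuclideanSpace ℝ (Fin d), ‖α‖ ≤ 1 ∧
        x = ∑ h : Fin k, (∑ r : Fin d, D i r * M r h) * (∑ r : Fin d, D j r * M r h) *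
              ω h * (∑ r : Fin d, M r h * α r)} =
      {x : ℝ | ∃ α : EuclideanSpace ℝ (Fin d), ‖α‖ ≤ 1 ∧ x = ∑ r, w r * α r} := by
    ext x
    constructor <;> rintro ⟨α, hα, rfl⟩ <;> exact ⟨α, hα, by rw [← key α]⟩
  have hentry : ∀ r : Fin d,
      (D * (∑ h : Fin k, (ω h * M r h) •
          Matrix.vecMulVec (fun a => M a h) (fun b => M b h)) * Dᵀ) i j = w r := by
    intro r
    have lhs_eq : (D * (∑ h : Fin k, (ω h * M r h) •
          Matrix.vecMulVec (fun a => M a h) (fun b => M b h)) * Dᵀ) i j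
        = ∑ a : Fin d, ∑ b : Fin d, ∑ h : Fin k,
            ω h * M r h * M a h * M b h * D i a * D j b := by
      simp only [Matrix.mul_apply, Matrix.sum_apply, Matrix.smul_apply,
        Matrix.vecMulVec_apply, Matrix.transpose_apply, smul_eq_mul,
        Finset.sum_mul, Finset.mul_sum]
      rw [Finset.sum_comm]
      exact Finset.sum_congr rfl fun a _ => Finset.sum_congr rfl fun b _ =>
        Finset.sum_congr rfl fun h _ => by ring
    rw [lhs_eq, sum_swap3]
    simp only [hw, hc, PiLp.toLp_apply]
    refine Finset.sum_congr rfl fun h _ => ?_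
    rw [Finset.sum_comm]
    simp only [Finset.sum_mul, Finset.mul_sum]
    exact Finset.sum_congr rfl fun a _ => Finset.sum_congr rfl fun b _ => by ring
  rw [hset, sup_inner_ball]
  rw [EuclideanSpace.norm_eq]
  congr 1
  exact Finset.sum_congr rfl fun r _ => by rw [hentry r]; simp [sq_abs]
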